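/- The prime factorization of a finite nonempty relation is unique: if {π_{U_1}(R), ..., π_{U_m}(R)} and {π_{V_1}(R), ..., π_{V_n}(R)} are both prime factorizations of R, then the two partitions {U_1,...,U_m} and {V_1,...,V_n} of the schema coincide (and hence the factor sets are equal). -/
import Mathlib


open Classical

noncomputable def restrictT {α D : Type*} (V : Set α) (t : α → Option D) : α → Option D :=
  fun a => if a ∈ V then t a else none

def combineT {α D : Type*} (q r : α → Option D) : α → Option D :=
  fun a => (q a).orElse (fun _ => r a)

def prodRel {α D : Type*} (Q R : Set (α → Option D)) : Set (α → Option D) :=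
  Set.image2 combineT Q R

def IsOver {α D : Type*} (U : Set α) (t : α → Option D) : Prop :=
  ∀ a, (t a).isSome ↔ a ∈ U

def IsRelOver {α D : Type*} (U : Set α) (R : Set (α → Option D)) : Prop :=
  R.Finite ∧ ∀ t ∈ R, IsOver U t

noncomputable def projRel {α D : Type*} (V : Set α) (R : Set (α → Option D)) :
    Set (α → Option D) :=
  (restrictT V) '' R

def IsFactor {α D : Type*} (U : Set α) (R : Set (α → Option D))
    (V : Set α) (Q : Set (α → Option D)) : Prop :=
  V.Nonempty ∧ V ⊆ U ∧ IsRelOver V Q ∧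
    ∃ R', IsRelOver (U \ V) R' ∧ R = prodRel Q R'

noncomputable def prodList {α D : Type*} (L : List (Set (α → Option D))) :
    Set (α → Option D) :=
  L.foldr prodRel {fun _ => none}

def IsPrimeRel {α D : Type*} (U : Set α) (Q : Set (α → Option D)) : Prop :=
  IsRelOver U Q ∧ ∀ V P, IsFactor U Q V P → P = Q

def selEq {α D : Type*} (A : α) (v : D) (S : Set (α → Option D)) : Set (α → Option D) :=
  {t ∈ S | t A = some v}

def selNe {α D : Type*} (A : α) (v : D) (S : Set (α → Option D)) : Set (α → Option D) :=
  {t ∈ S | t A ≠ some v}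

noncomputable def mixT {α D : Type*} (V : Set α) (s t : α → Option D) : α → Option D :=
  fun a => if a ∈ V then s a else t a

lemma combineT_eq {α D : Type*} {V : Set α} {q r : α → Option D} (hq : IsOver V q) (a : α) :
    combineT q r a = if a ∈ V then q a else r a := by
  by_cases h : a ∈ V
  · obtain ⟨x, hx⟩ := Option.isSome_iff_exists.1 ((hq a).2 h)
    simp [combineT, hx, h]
  · have hn : q a = none := Option.not_isSome_iff_eq_none.1 (fun hs => h ((hq a).1 hs))
    simp [combineT, hn, h]

lemma isOver_restrict {α D : Type*} {V U : Set α} (hVU : V ⊆ U) {t : α → Option D}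
    (ht : IsOver U t) : IsOver V (restrictT V t) := by
  intro a
  by_cases h : a ∈ V
  · simp [restrictT, h, (ht a).2 (hVU h)]
  · simp [restrictT, h]

lemma factor_swap {α D : Type*} {U V : Set α} {R Q : Set (α → Option D)}
    (h : IsFactor U R V Q) : ∀ s ∈ R, ∀ t ∈ R, mixT V s t ∈ R := by
  obtain ⟨-, -, ⟨-, hQ⟩, R', ⟨-, hR'⟩, rfl⟩ := h
  rintro s ⟨q, hq, r, hr, rfl⟩ t ⟨q2, hq2, r2, hr2, rfl⟩
  refine ⟨q, hq, r2, hr2, ?_⟩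
  funext a
  by_cases hV : a ∈ V
  · simp [mixT, hV, combineT_eq (hQ q hq) a, combineT_eq (hQ q2 hq2) a]
  · simp [mixT, hV, combineT_eq (hQ q hq) a, combineT_eq (hQ q2 hq2) a]

lemma swap_factor {α D : Type*} {U V : Set α} {R : Set (α → Option D)}
    (hRfin : R.Finite) (hover : ∀ t ∈ R, IsOver U t)
    (hVne : V.Nonempty) (hVU : V ⊆ U)
    (hswap : ∀ s ∈ R, ∀ t ∈ R, mixT V s t ∈ R) :
    IsFactor U R V (projRel V R) := by
  refine ⟨hVne, hVU, ⟨hRfin.image _, ?_⟩, projRel (U \ V) R,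
    ⟨hRfin.image _, ?_⟩, ?_⟩
  · rintro t ⟨s, hs, rfl⟩
    exact isOver_restrict hVU (hover s hs)
  · rintro t ⟨s, hs, rfl⟩
    exact isOver_restrict Set.diff_subset (hover s hs)
  · ext t
    constructor
    · intro ht
      refine ⟨restrictT V t, ⟨t, ht, rfl⟩, restrictT (U \ V) t, ⟨t, ht, rfl⟩, ?_⟩
      funext a
      have h1 : IsOver V (restrictT V t) := isOver_restrict hVU (hover t ht)
      rw [combineT_eq h1 a]
      by_cases hV : a ∈ V
      · simp [restrictT, hV]
      · by_cases hU : a ∈ U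
        · simp [restrictT, hV, hU]
        · have : t a = none :=
            Option.not_isSome_iff_eq_none.1 (fun hs => hU ((hover t ht a).1 hs))
          simp [restrictT, hV, hU, this]
    · rintro ⟨q, ⟨s, hs, rfl⟩, r, ⟨s', hs', rfl⟩, rfl⟩
      have key : combineT (restrictT V s) (restrictT (U \ V) s') = mixT V s s' := by
        funext a
        have h1 : IsOver V (restrictT V s) := isOver_restrict hVU (hover s hs)
        rw [combineT_eq h1 a]
        by_cases hV : a ∈ V
        · simp [restrictT, mixT, hV]
        · by_cases hU : a ∈ U
          · simp [restrictT, mixT, hV, hU]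
          · have : s' a = none :=
              Option.not_isSome_iff_eq_none.1 (fun h2 => hU ((hover s' hs' a).1 h2))
            simp [restrictT, mixT, hV, hU, this]
      rw [key]
      exact hswap s hs s' hs'


lemma sub_of_inter {α D : Type*} {U : Set α} {R : Set (α → Option D)}
    (hR : IsRelOver U R) (hRne : R.Nonempty)
    {V W : Set α} (hVU : V ⊆ U)
    (hfV : IsFactor U R V (projRel V R)) (hfW : IsFactor U R W (projRel W R))
    (hpV : IsPrimeRel V (projRel V R)) (hiw : (V ∩ W).Nonempty) : V ⊆ W := by
  obtain ⟨hRfin, hRover⟩ := hR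
  have swapV := factor_swap hfV
  have swapW := factor_swap hfW
  -- swap property of V ∩ W on projRel V R
  have hswap : ∀ s ∈ projRel V R, ∀ t ∈ projRel V R,
      mixT (V ∩ W) s t ∈ projRel V R := by
    rintro s' ⟨s, hs, rfl⟩ t' ⟨t, ht, rfl⟩
    refine ⟨mixT W s t, swapW s hs t ht, ?_⟩
    funext a
    by_cases hV : a ∈ V <;> by_cases hW : a ∈ W <;>
      simp [restrictT, mixT, hV, hW]
  have hfac : IsFactor V (projRel V R) (V ∩ W)
      (projRel (V ∩ W) (projRel V R)) := by
    refine swap_factor (hRfin.image _) ?_ hiw Set.inter_subset_left hswap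
    rintro t ⟨s, hs, rfl⟩
    exact isOver_restrict hVU (hRover s hs)
  have heq := hpV.2 _ _ hfac
  obtain ⟨t0, ht0⟩ := hRne
  have htV : restrictT V t0 ∈ projRel V R := ⟨t0, ht0, rfl⟩
  have htVW : restrictT V t0 ∈ projRel (V ∩ W) (projRel V R) := by
    rw [heq]; exact htV
  obtain ⟨u, hu, huq⟩ := htVW
  have h1 : IsOver V (restrictT V t0) := isOver_restrict hVU (hRover t0 ht0)
  have h2 : IsOver (V ∩ W) (restrictT V t0) := by
    rw [← huq]
    obtain ⟨u', hu', rfl⟩ := hu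
    exact isOver_restrict Set.inter_subset_left
      (isOver_restrict hVU (hRover u' hu'))
  intro a ha
  exact ((h2 a).1 ((h1 a).2 ha)).2


theorem stmt_1 {α D : Type*} (U : Set α) (hUfin : U.Finite)
    (R : Set (α → Option D)) (hR : IsRelOver U R) (hRne : R.Nonempty)
    (L1 L2 : List (Set α))
    (hne1 : ∀ V ∈ L1, V.Nonempty) (hd1 : L1.Pairwise Disjoint)
    (hcov1 : ∀ a, a ∈ U ↔ ∃ V ∈ L1, a ∈ V)
    (hfac1 : ∀ V ∈ L1, IsFactor U R V (projRel V R))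
    (hprime1 : ∀ V ∈ L1, IsPrimeRel V (projRel V R))
    (hprod1 : prodList (L1.map (fun V => projRel V R)) = R)
    (hne2 : ∀ V ∈ L2, V.Nonempty) (hd2 : L2.Pairwise Disjoint)
    (hcov2 : ∀ a, a ∈ U ↔ ∃ V ∈ L2, a ∈ V)
    (hfac2 : ∀ V ∈ L2, IsFactor U R V (projRel V R))
    (hprime2 : ∀ V ∈ L2, IsPrimeRel V (projRel V R))
    (hprod2 : prodList (L2.map (fun V => projRel V R)) = R) :
    ∀ V : Set α, V ∈ L1 ↔ V ∈ L2 := by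
  have key : ∀ (M1 M2 : List (Set α)),
      (∀ V ∈ M1, V.Nonempty) →
      (∀ a, a ∈ U ↔ ∃ V ∈ M2, a ∈ V) →
      (∀ V ∈ M1, IsFactor U R V (projRel V R)) →
      (∀ V ∈ M2, IsFactor U R V (projRel V R)) →
      (∀ V ∈ M1, IsPrimeRel V (projRel V R)) →
      (∀ V ∈ M2, IsPrimeRel V (projRel V R)) →
      ∀ V ∈ M1, ∃ W ∈ M2, V = W := by
    intro M1 M2 hne hcov hf1 hf2 hp1 hp2 V hV
    obtain ⟨a, ha⟩ := hne V hV
    have haU : a ∈ U := (hf1 V hV).2.1 ha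
    obtain ⟨W, hW, haW⟩ := (hcov a).1 haU
    refine ⟨W, hW, ?_⟩
    have h1 : V ⊆ W := sub_of_inter hR hRne (hf1 V hV).2.1 (hf1 V hV) (hf2 W hW)
      (hp1 V hV) ⟨a, ha, haW⟩
    have h2 : W ⊆ V := sub_of_inter hR hRne (hf2 W hW).2.1 (hf2 W hW) (hf1 V hV)
      (hp2 W hW) ⟨a, haW, ha⟩
    exact Set.Subset.antisymm h1 h2
  intro V
  constructor
  · intro hV
    obtain ⟨W, hW, rfl⟩ := key L1 L2 hne1 hcov2 hfac1 hfac2 hprime1 hprime2 V hV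
    exact hW
  · intro hV
    obtain ⟨W, hW, rfl⟩ := key L2 L1 hne2 hcov1 hfac2 hfac1 hprime2 hprime1 V hV
    exact hW
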